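/- Let A be a local integral domain containing a field k of characteristic zero and φ a locally finite k-algebra endomorphism of A. If φ(v) = c·v with v ≠ 0 and c ∈ k nonzero, then there is no w ∈ A linearly independent from v over k with φ(w) = c·w + v. -/

import Mathlib

set_option linter.unusedSectionVars false
set_option linter.dupNamespace false
set_option maxHeartbeats 1000000

open Polynomial


section Aux

lemma aux_rel {k A : Type*} [Field k] [AddCommGroup A] [Module k A]
    (f : ℕ → A) (hFG : (Submodule.span k (Set.range f)).FG) :
    ∃ S : Finset ℕ, ∃ α : ℕ → k, (∑ m ∈ S, α m • f m = 0) ∧ ∃ m ∈ S, α m ≠ 0 := by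
  by_contra hcon
  push_neg at hcon
  have hLI : LinearIndependent k f := by
    rw [linearIndependent_iff']
    intro s g hg i hi
    exact hcon s g hg i hi
  set N := Submodule.span k (Set.range f)
  haveI : Module.Finite k N := Module.Finite.iff_fg.mpr hFG
  have hf' : ∀ m, f m ∈ N := fun m => Submodule.subset_span ⟨m, rfl⟩
  have hLI' : LinearIndependent k (fun m => (⟨f m, hf' m⟩ : N)) :=
    LinearIndependent.of_comp N.subtype (by exact hLI)
  exact Module.Finite.not_linearIndependent_of_infinite _ hLI'

lemma aux_units_rel {k A : Type*} [Field k] [CommRing A] [Algebra k A]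
    (f g : ℕ → A) (hinv : ∀ m, f m * g m = 1)
    (hFG : (Submodule.span k (Set.range f)).FG) :
    ∃ S : Finset ℕ, ∃ α : ℕ → k,
      (∑ m ∈ S, α m • ∏ m' ∈ S.erase m, g m' = 0) ∧ ∃ m ∈ S, α m ≠ 0 := by
  obtain ⟨S, α, hsum, hm⟩ := aux_rel f hFG
  refine ⟨S, α, ?_, hm⟩
  have h0 : (∑ m ∈ S, α m • f m) * ∏ m' ∈ S, g m' = 0 := by rw [hsum, zero_mul]
  rw [Finset.sum_mul] at h0
  rw [← h0]
  apply Finset.sum_congr rfl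
  intro m hmS
  rw [smul_mul_assoc]
  congr 1
  rw [← Finset.mul_prod_erase S g hmS, ← mul_assoc, hinv m, one_mul]

lemma aux_alg_orbit {k A : Type*} [Field k] [CommRing A] [IsDomain A] [Algebra k A]
    (φ : A →ₐ[k] A) {x : A} (q : Polynomial k) (hq : q ≠ 0) (hqx : aeval x q = 0)
    (hinj : Function.Injective fun m : ℕ => (φ ^ m) x) : False := by
  have hmem : ∀ m : ℕ, (φ ^ m) x ∈ {y | (q.map (algebraMap k A)).IsRoot y} := by
    intro m
    have h : aeval ((φ ^ m) x) q = (φ ^ m) (aeval x q) := aeval_algHom_apply (φ ^ m) x q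
    simp only [Set.mem_setOf_eq, IsRoot, eval_map, ← aeval_def]
    rw [h, hqx, map_zero]
  have hfin : Set.Finite {y | (q.map (algebraMap k A)).IsRoot y} :=
    Polynomial.finite_setOf_isRoot (Polynomial.map_ne_zero hq)
  exact (Set.infinite_of_injective_forall_mem hinj hmem) hfin

end Aux

section Case1

variable {k A : Type*} [Field k] [CharZero k] [CommRing A] [IsDomain A]
    [IsLocalRing A] [Algebra k A]

lemma aux_scalar_unit {t : k} (ht : t ≠ 0) : IsUnit (algebraMap k A t) :=
  isUnit_iff_exists_inv.mpr ⟨algebraMap k A t⁻¹, by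
    rw [← map_mul, mul_inv_cancel₀ ht, map_one]⟩

lemma aux_scalar_inj : Function.Injective (algebraMap k A) :=
  (algebraMap k A).injective

lemma aux_case1 (φ : A →ₐ[k] A)
    (hlf : ∀ a : A, (Submodule.span k (Set.range fun m : ℕ => (φ ^ (m + 1)) a)).FG)
    (v w : A) (c : k) (hv : v ≠ 0) (hc : c ≠ 0)
    (hφv : φ v = algebraMap k A c * v) (hφw : φ w = algebraMap k A c * w + v)
    (hvu : IsUnit v) : False := by
  obtain ⟨vu, hvu'⟩ := hvu
  set u : A := w * ↑vu⁻¹ with hu_def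
  have hcA : (algebraMap k A c) ≠ 0 :=
    (map_ne_zero_iff (algebraMap k A) aux_scalar_inj).mpr hc
  -- φ of the inverse of v
  have hvinv1 : v * (↑vu⁻¹ : A) = 1 := by rw [← hvu']; exact vu.mul_inv
  have hφvinv1 : φ v * φ (↑vu⁻¹ : A) = 1 := by rw [← map_mul, hvinv1, map_one]
  have hkey : (algebraMap k A c * v) * (algebraMap k A c⁻¹ * ↑vu⁻¹) = 1 := by
    rw [mul_mul_mul_comm, ← map_mul, mul_inv_cancel₀ hc, map_one, one_mul, hvinv1]
  have hφvinv : φ (↑vu⁻¹ : A) = algebraMap k A c⁻¹ * ↑vu⁻¹ := by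
    have h1 : (algebraMap k A c * v) * φ (↑vu⁻¹ : A) = 1 := by rw [← hφv]; exact hφvinv1
    have hne : (algebraMap k A c * v) ≠ 0 := mul_ne_zero hcA hv
    exact mul_left_cancel₀ hne (h1.trans hkey.symm)
  -- φ u = u + e
  set e : A := algebraMap k A c⁻¹ with he_def
  have h1 : algebraMap k A c * e = 1 := by
    rw [he_def, ← map_mul, mul_inv_cancel₀ hc, map_one]
  have hφu : φ u = u + e := by
    rw [hu_def, map_mul, hφw, hφvinv, add_mul]
    have h2 : (algebraMap k A c * w) * (e * ↑vu⁻¹) = w * ↑vu⁻¹ := by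
      rw [mul_mul_mul_comm, h1, one_mul]
    have h3 : v * (e * ↑vu⁻¹) = e := by
      rw [mul_comm v _, mul_assoc, mul_comm (↑vu⁻¹ : A) v, hvinv1, mul_one]
    rw [h2, h3]
  -- iterates of u
  have hiter : ∀ m : ℕ, (φ ^ m) u = u + algebraMap k A ((m : k) * c⁻¹) := by
    intro m
    induction m with
    | zero => simp
    | succ m ih =>
      rw [pow_succ', AlgHom.mul_apply, ih, map_add, hφu, AlgHom.commutes, he_def,
        add_assoc, ← map_add]
      congr 1
      push_cast
      ring
  have hinj : Function.Injective fun m : ℕ => (φ ^ m) u := by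
    intro m m' h
    simp only [hiter] at h
    have := aux_scalar_inj (add_left_cancel h)
    have h2 : (m : k) = (m' : k) := mul_right_cancel₀ (inv_ne_zero hc) this
    exact_mod_cast h2
  -- at most one non-unit among u + (m/c)
  have huniq : ∀ m m' : ℕ, ¬ IsUnit (u + algebraMap k A ((m : k) * c⁻¹)) →
      ¬ IsUnit (u + algebraMap k A ((m' : k) * c⁻¹)) → m = m' := by
    intro m m' h h'
    by_contra hne
    have hmem : u + algebraMap k A ((m : k) * c⁻¹) ∈ IsLocalRing.maximalIdeal A :=
      (IsLocalRing.mem_maximalIdeal _).mpr h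
    have hmem' : u + algebraMap k A ((m' : k) * c⁻¹) ∈ IsLocalRing.maximalIdeal A :=
      (IsLocalRing.mem_maximalIdeal _).mpr h'
    have hd : algebraMap k A ((m : k) * c⁻¹ - (m' : k) * c⁻¹) ∈ IsLocalRing.maximalIdeal A := by
      have := Ideal.sub_mem _ hmem hmem'
      rw [map_sub]
      convert this using 1
      ring
    have hdu : IsUnit (algebraMap k A ((m : k) * c⁻¹ - (m' : k) * c⁻¹)) := by
      apply aux_scalar_unit
      rw [sub_ne_zero, ← sub_ne_zero, ← sub_mul]
      apply mul_ne_zero _ (inv_ne_zero hc)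
      rw [sub_ne_zero]
      exact fun hh => hne (by exact_mod_cast hh)
    exact (IsLocalRing.maximalIdeal.isMaximal A).ne_top (Ideal.eq_top_of_isUnit_mem _ hd hdu)
  -- choose M with all indices ≥ M units
  set P : ℕ → Prop := fun m => IsUnit (u + algebraMap k A ((m : k) * c⁻¹)) with hP
  have hM : ∃ M : ℕ, ∀ j : ℕ, P (M + j) := by
    by_cases hex : ∃ m, ¬ P m
    · obtain ⟨b, hb⟩ := hex
      refine ⟨b + 1, fun j => ?_⟩
      by_contra hbad
      have := huniq _ _ hbad hb
      omega
    · push_neg at hex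
      exact ⟨0, fun j => hex _⟩
  obtain ⟨M, hM⟩ := hM
  set t : ℕ → k := fun m => ((M + m + 1 : ℕ) : k) * c⁻¹ with ht
  have htinj : ∀ m m' : ℕ, t m = t m' → m = m' := by
    intro m m' h
    rw [ht] at h
    have h2 := mul_right_cancel₀ (inv_ne_zero hc) h
    have h3 : (M + m + 1 : ℕ) = (M + m' + 1 : ℕ) := by exact_mod_cast h2
    omega
  obtain ⟨U0, hU0'⟩ := hM 0
  set a : A := (↑U0⁻¹ : A) with ha_def
  set g : ℕ → A := fun m => u + algebraMap k A (t m) with hg_def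
  have hiter2 : ∀ m : ℕ, (φ ^ (m + 1)) (u + algebraMap k A (((M + 0 : ℕ) : k) * c⁻¹)) = g m := by
    intro m
    rw [map_add, AlgHom.commutes, hiter (m + 1), add_assoc, ← map_add, hg_def]
    congr 1
    rw [ht]
    push_cast
    ring
  have hfg : ∀ m : ℕ, (φ ^ (m + 1)) a * g m = 1 := by
    intro m
    have h1 : (φ ^ (m + 1)) a * (φ ^ (m + 1)) (↑U0 : A) = 1 := by
      rw [← map_mul, ha_def, Units.inv_mul, map_one]
    rw [← h1]
    congr 1
    rw [hU0', hiter2 m]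
  obtain ⟨S, α, hrel, m1, hm1S, hm1⟩ := aux_units_rel (fun m => (φ ^ (m + 1)) a) g hfg (hlf a)
  set Pq : Polynomial k := ∑ m ∈ S, C (α m) * ∏ m' ∈ S.erase m, (X + C (t m')) with hPq_def
  have haeval : aeval u Pq = 0 := by
    rw [hPq_def, map_sum, ← hrel]
    apply Finset.sum_congr rfl
    intro m hmS
    rw [map_mul, aeval_C, map_prod, Algebra.smul_def]
    congr 1
    apply Finset.prod_congr rfl
    intro m' _
    rw [map_add, aeval_X, aeval_C, hg_def]
  have hPq0 : Pq ≠ 0 := by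
    intro h0
    have heval := congrArg (Polynomial.eval (-(t m1))) h0
    rw [hPq_def, Polynomial.eval_finset_sum, Polynomial.eval_zero] at heval
    rw [Finset.sum_eq_single m1] at heval
    · rw [Polynomial.eval_mul, Polynomial.eval_C, Polynomial.eval_prod] at heval
      rcases mul_eq_zero.mp heval with h | h
      · exact hm1 h
      · obtain ⟨m', hm'mem, hm'0⟩ := Finset.prod_eq_zero_iff.mp h
        rw [Polynomial.eval_add, Polynomial.eval_X, Polynomial.eval_C] at hm'0
        have : t m' = t m1 := (neg_add_eq_zero.mp hm'0).symm
        exact (Finset.ne_of_mem_erase hm'mem) (htinj m' m1 this)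
    · intro m hmS hmne
      rw [Polynomial.eval_mul, Polynomial.eval_prod]
      apply mul_eq_zero_of_right
      apply Finset.prod_eq_zero (Finset.mem_erase.mpr ⟨hmne.symm, hm1S⟩)
      rw [Polynomial.eval_add, Polynomial.eval_X, Polynomial.eval_C, neg_add_cancel]
    · intro h
      exact absurd hm1S h
  exact aux_alg_orbit φ Pq hPq0 haeval hinj

end Case1

namespace Stmt14
variable {k : Type*} [Field k] (c : k)

noncomputable def sig0 : Polynomial k →+* Polynomial k :=
  eval₂RingHom Polynomial.C (Polynomial.C c * Polynomial.X)

lemma sig0_C (t : k) : sig0 c (C t) = C t := eval₂_C _ _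

lemma sig0_coeff (b : Polynomial k) (j : ℕ) : (sig0 c b).coeff j = c ^ j * b.coeff j := by
  have hb : sig0 c b = ∑ i ∈ Finset.range (b.natDegree + 1), C (b.coeff i * c ^ i) * X ^ i := by
    show eval₂ C (C c * X) b = _
    rw [eval₂_eq_sum_range]
    apply Finset.sum_congr rfl
    intro i _
    rw [mul_pow, ← C_pow, ← mul_assoc, ← C_mul]
  rw [hb, finset_sum_coeff]
  simp only [coeff_C_mul, coeff_X_pow, mul_ite, mul_one, mul_zero]
  rw [Finset.sum_ite_eq (Finset.range (b.natDegree + 1)) j]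
  by_cases hj : j ∈ Finset.range (b.natDegree + 1)
  · rw [if_pos hj]; ring
  · rw [if_neg hj]
    have : b.natDegree < j := by simpa using Nat.lt_of_succ_le (by simpa [Finset.mem_range] using hj)
    rw [coeff_eq_zero_of_natDegree_lt this, mul_zero]


variable {k : Type*} [Field k] (c : k)

noncomputable def yy : Polynomial (Polynomial k) :=
  Polynomial.C (Polynomial.C c) * Polynomial.X + Polynomial.C Polynomial.X

lemma yy_pow_eq (i : ℕ) : (yy c) ^ i =
    ∑ t ∈ Finset.range (i + 1),
      C ((C c) ^ t * (X : Polynomial k) ^ (i - t) * (i.choose t : Polynomial k)) * X ^ t := by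
  rw [yy, add_pow]
  apply Finset.sum_congr rfl
  intro t _
  rw [mul_pow, ← C_pow, ← C_pow, C_mul, C_mul, map_natCast C]
  simp only [C_pow]
  ring

lemma yy_pow_coeff_le {i j : ℕ} (hji : j ≤ i) :
    ((yy c) ^ i).coeff j = (C c) ^ j * (X : Polynomial k) ^ (i - j) * (i.choose j : Polynomial k) := by
  rw [yy_pow_eq, finset_sum_coeff]
  simp only [coeff_C_mul, coeff_X_pow, mul_ite, mul_one, mul_zero]
  rw [Finset.sum_ite_eq (Finset.range (i + 1)) j]
  rw [if_pos (Finset.mem_range.mpr (Nat.lt_succ_of_le hji))]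

lemma yy_pow_coeff_gt {i j : ℕ} (hij : i < j) : ((yy c) ^ i).coeff j = 0 := by
  rw [yy_pow_eq, finset_sum_coeff]
  apply Finset.sum_eq_zero
  intro t ht
  rw [coeff_C_mul, coeff_X_pow, if_neg, mul_zero]
  intro h
  subst h
  exact absurd (Finset.mem_range.mp ht) (by omega)


noncomputable def Sig : Polynomial (Polynomial k) →+* Polynomial (Polynomial k) :=
  eval₂RingHom (Polynomial.C.comp (sig0 c)) (yy c)

lemma Sig_eq_sum (p : Polynomial (Polynomial k)) :
    Sig c p = ∑ i ∈ Finset.range (p.natDegree + 1), C (sig0 c (p.coeff i)) * (yy c) ^ i := by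
  show eval₂ _ _ p = _
  rw [eval₂_eq_sum_range]
  rfl

lemma Sig_coeff (p : Polynomial (Polynomial k)) (j : ℕ) :
    (Sig c p).coeff j =
      ∑ i ∈ Finset.range (p.natDegree + 1), sig0 c (p.coeff i) * ((yy c) ^ i).coeff j := by
  rw [Sig_eq_sum, finset_sum_coeff]
  apply Finset.sum_congr rfl
  intro i _
  rw [coeff_C_mul]

lemma Sig_coeff_gt (p : Polynomial (Polynomial k)) {j : ℕ} (hj : p.natDegree < j) :
    (Sig c p).coeff j = 0 := by
  rw [Sig_coeff]
  apply Finset.sum_eq_zero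
  intro i hi
  have hij : i < j := by have := Finset.mem_range.mp hi; omega
  rw [yy_pow_coeff_gt c hij, mul_zero]

lemma Sig_coeff_top (p : Polynomial (Polynomial k)) :
    (Sig c p).coeff p.natDegree = sig0 c (p.coeff p.natDegree) * (C c) ^ p.natDegree := by
  rw [Sig_coeff, Finset.sum_range_succ]
  rw [yy_pow_coeff_le c (le_refl p.natDegree)]
  rw [Finset.sum_eq_zero, zero_add]
  · simp
  · intro i hi
    rw [yy_pow_coeff_gt c (Finset.mem_range.mp hi), mul_zero]

lemma Sig_coeff_sub_one (p : Polynomial (Polynomial k)) {m : ℕ} (hm : p.natDegree = m + 1) :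
    (Sig c p).coeff m = sig0 c (p.coeff m) * (C c) ^ m
      + sig0 c (p.coeff (m + 1)) * (C c) ^ m * (X : Polynomial k) * (m + 1 : Polynomial k) := by
  rw [Sig_coeff, hm, Finset.sum_range_succ, Finset.sum_range_succ]
  rw [yy_pow_coeff_le c (le_refl m), yy_pow_coeff_le c (Nat.le_succ m)]
  rw [Finset.sum_eq_zero, zero_add]
  · have h1 : (m + 1) - m = 1 := by omega
    have h2 : ((m+1).choose m : Polynomial k) = (m + 1 : Polynomial k) := by
      rw [Nat.choose_succ_self_right]
      push_cast; ring
    rw [h1, h2]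
    simp [pow_one]
    ring
  · intro i hi
    rw [yy_pow_coeff_gt c (Finset.mem_range.mp hi), mul_zero]


variable {A : Type*} [CommRing A] [Algebra k A] (v w : A)

noncomputable def EE : Polynomial (Polynomial k) →+* A :=
  eval₂RingHom ((Polynomial.aeval v : Polynomial k →ₐ[k] A).toRingHom) w

lemma EE_C (b : Polynomial k) : EE v w (C b) = aeval v b := eval₂_C _ _

lemma EE_X : EE v w (X : Polynomial (Polynomial k)) = w := eval₂_X _ _

lemma EE_Sig (φ : A →ₐ[k] A) (hφv : φ v = algebraMap k A c * v)
    (hφw : φ w = algebraMap k A c * w + v) (p : Polynomial (Polynomial k)) :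
    EE v w (Sig c p) = φ (EE v w p) := by
  have h : (EE v w).comp (Sig c) = (φ.toRingHom).comp (EE (k := k) v w) := by
    apply Polynomial.ringHom_ext
    · intro b
      simp only [RingHom.comp_apply]
      have h1 : Sig c (C b) = C (sig0 c b) := eval₂_C _ _
      rw [h1, EE_C, EE_C]
      have h2 : sig0 c b = b.comp (Polynomial.C c * Polynomial.X) := rfl
      rw [h2, aeval_comp]
      have h3 : aeval v (Polynomial.C c * Polynomial.X) = algebraMap k A c * v := by simp
      rw [h3]
      show _ = φ (aeval v b)
      rw [← aeval_algHom_apply, hφv]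
    · simp only [RingHom.comp_apply]
      have h1 : Sig c (X : Polynomial (Polynomial k)) = yy c := eval₂_X _ _
      rw [h1, EE_X, yy]
      show EE v w _ = φ w
      rw [map_add, map_mul, EE_C, EE_X, EE_C, hφw]
      simp
  exact congrFun (congrArg (fun f => f.toFun) h) p


lemma aux_case2 {A : Type*} [CharZero k] [CommRing A] [IsDomain A]
    [IsLocalRing A] [Algebra k A] (φ : A →ₐ[k] A)
    (hlf : ∀ a : A, (Submodule.span k (Set.range fun m : ℕ => (φ ^ (m + 1)) a)).FG)
    (v w : A) (hv : v ≠ 0) (hc : c ≠ 0)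
    (hφv : φ v = algebraMap k A c * v) (hφw : φ w = algebraMap k A c * w + v)
    (hvnu : ¬ IsUnit v) (θ : k) (hsu : IsUnit (algebraMap k A θ + v + w)) : False := by
  classical
  have hva : ∀ b : Polynomial k, aeval v b = 0 → b = 0 := by
    intro b hb
    by_contra hb0
    exact hvnu ((isAlgebraic_iff_isIntegral.mp ⟨b, hb0, hb⟩).isUnit hv)
  set γ : ℕ → k := fun m => c ^ m * (c + m + 1) with hγ
  set g : ℕ → A := fun m =>
      algebraMap k A θ + algebraMap k A (γ m) * v + algebraMap k A (c ^ (m + 1)) * w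
    with hgdef
  set s : A := algebraMap k A θ + v + w with hsdef
  have hiter : ∀ m : ℕ, (φ ^ (m + 1)) s = g m := by
    intro m
    induction m with
    | zero =>
      rw [pow_one, hsdef]
      simp only [hgdef, hγ, map_add, map_mul, map_pow, map_one, map_natCast,
        AlgHom.commutes, hφv, hφw]
      push_cast
      ring
    | succ m ih =>
      have hps : (φ ^ (m + 2)) s = φ ((φ ^ (m + 1)) s) := by
        rw [pow_succ', AlgHom.mul_apply]
      rw [hps, ih]
      simp only [hgdef, hγ, map_add, map_mul, map_pow, map_one, map_natCast,
        AlgHom.commutes, hφv, hφw]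
      push_cast
      ring
  obtain ⟨su, hsu'⟩ := hsu
  have hfg : ∀ m : ℕ, (φ ^ (m + 1)) ((↑su⁻¹ : A)) * g m = 1 := by
    intro m
    rw [← hiter m, ← map_mul]
    have : (↑su⁻¹ : A) * s = 1 := by rw [← hsu']; exact su.inv_mul
    rw [this, map_one]
  obtain ⟨S, α, hrel, m1, hm1S, hm1⟩ :=
    aux_units_rel (k := k) (fun m => (φ ^ (m + 1)) (↑su⁻¹ : A)) g hfg (hlf _)
  -- polynomials
  set GG : ℕ → Polynomial (Polynomial k) := fun m =>
    C (Polynomial.C θ + Polynomial.C (γ m) * Polynomial.X)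
      + C (Polynomial.C (c ^ (m + 1))) * X with hGG
  have hEG : ∀ m, EE v w (GG m) = g m := by
    intro m
    simp only [hGG, hgdef, map_add, map_mul, EE_C, EE_X, aeval_C, aeval_X]
    try ring
  set P : Polynomial (Polynomial k) :=
    ∑ m ∈ S, C (Polynomial.C (α m)) * ∏ m' ∈ S.erase m, GG m' with hP
  have hrel' : ∑ m ∈ S, algebraMap k A (α m) * ∏ m' ∈ S.erase m, g m' = 0 := by
    simpa [Algebra.smul_def] using hrel
  have hEP : EE v w P = 0 := by
    rw [hP, map_sum, ← hrel']
    apply Finset.sum_congr rfl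
    intro m hmS
    have h1 : EE v w (C (Polynomial.C (α m)) * ∏ m' ∈ S.erase m, GG m')
        = EE v w (C (Polynomial.C (α m))) * EE v w (∏ m' ∈ S.erase m, GG m') := map_mul _ _ _
    rw [h1, EE_C, aeval_C, map_prod]
    congr 1
    exact Finset.prod_congr rfl fun m' _ => hEG m'
  -- P ≠ 0 via evaluation
  set ξ : Polynomial k := Polynomial.C (-θ / c ^ (m1 + 1))
      + Polynomial.C (-(γ m1) / c ^ (m1 + 1)) * Polynomial.X with hξ
  set Ψ : Polynomial (Polynomial k) →+* Polynomial k := evalRingHom ξ with hΨ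
  have hcpow : ∀ m : ℕ, (c : k) ^ (m + 1) ≠ 0 := fun m => pow_ne_zero _ hc
  have hGeval : ∀ m, Ψ (GG m) =
      Polynomial.C (θ - c ^ (m + 1) * θ / c ^ (m1 + 1))
        + Polynomial.C (γ m - c ^ (m + 1) * γ m1 / c ^ (m1 + 1)) * Polynomial.X := by
    intro m
    have key : ∀ x y z t u : k, Polynomial.C x + Polynomial.C y * Polynomial.X
        + Polynomial.C z * (Polynomial.C t + Polynomial.C u * Polynomial.X)
        = Polynomial.C (x + z * t) + Polynomial.C (y + z * u) * Polynomial.X := by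
      intro x y z t u
      rw [C_add, C_add, C_mul, C_mul]
      ring
    have h0 : Ψ (GG m) = Polynomial.C θ + Polynomial.C (γ m) * Polynomial.X
        + Polynomial.C (c ^ (m + 1)) * ξ := by
      simp only [hGG, hΨ, coe_evalRingHom, eval_add, eval_mul, eval_C, eval_X]
    rw [h0, hξ, key]
    have e1 : θ + c ^ (m + 1) * (-θ / c ^ (m1 + 1)) = θ - c ^ (m + 1) * θ / c ^ (m1 + 1) := by
      ring
    have e2 : γ m + c ^ (m + 1) * (-(γ m1) / c ^ (m1 + 1))
        = γ m - c ^ (m + 1) * γ m1 / c ^ (m1 + 1) := by ring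
    rw [e1, e2]
  have hGm1 : Ψ (GG m1) = 0 := by
    rw [hGeval m1]
    have e1 : c ^ (m1 + 1) * θ / c ^ (m1 + 1) = θ := by field_simp
    have e2 : c ^ (m1 + 1) * γ m1 / c ^ (m1 + 1) = γ m1 := by field_simp
    rw [e1, e2]
    simp
  have hGne : ∀ m, m ≠ m1 → Ψ (GG m) ≠ 0 := by
    intro m hne h0
    have hcoeff := congrArg (fun b => Polynomial.coeff b 1) h0
    simp only [hGeval m, coeff_add, coeff_C, coeff_C_mul, coeff_X_one, Polynomial.coeff_zero,
      mul_one] at hcoeff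
    rw [if_neg one_ne_zero, zero_add] at hcoeff
    have e3 : c ^ (m + 1) * γ m1 / c ^ (m1 + 1) = c ^ m * (c + m1 + 1) := by
      rw [hγ]
      simp only
      field_simp
      ring
    rw [e3, hγ] at hcoeff
    simp only at hcoeff
    have : (c ^ m) * ((m : k) - (m1 : k)) = 0 := by
      rw [← hcoeff]; ring
    rcases mul_eq_zero.mp this with h | h
    · exact pow_ne_zero m hc h
    · exact hne (Nat.cast_injective (sub_eq_zero.mp h))
  have hP0 : P ≠ 0 := by
    intro h0
    have h1 := congrArg Ψ h0
    rw [map_zero, hP, map_sum] at h1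
    rw [Finset.sum_eq_single m1] at h1
    · rw [map_mul, map_prod] at h1
      have hC : Ψ (C (Polynomial.C (α m1))) = Polynomial.C (α m1) := by
        simp [hΨ]
      rw [hC] at h1
      rcases mul_eq_zero.mp h1 with h | h
      · exact hm1 (by simpa using h)
      · obtain ⟨m', hm'mem, hm'0⟩ := Finset.prod_eq_zero_iff.mp h
        exact hGne m' (Finset.ne_of_mem_erase hm'mem) hm'0
    · intro m hmS hmne
      rw [map_mul, map_prod]
      apply mul_eq_zero_of_right
      exact Finset.prod_eq_zero (Finset.mem_erase.mpr ⟨fun h => hmne h.symm, hm1S⟩) hGm1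
    · intro h
      exact absurd hm1S h
  -- the kernel ideal
  set I : Ideal (Polynomial (Polynomial k)) := RingHom.ker (EE (k := k) v w) with hI
  have hPI : P ∈ I := by rw [hI, RingHom.mem_ker]; exact hEP
  have hSigI : ∀ q, q ∈ I → Sig c q ∈ I := by
    intro q hq
    rw [hI, RingHom.mem_ker] at hq ⊢
    rw [EE_Sig c v w φ hφv hφw q, hq, map_zero]
  have hexQ : ∃ d : ℕ, ∃ q, q ∈ I ∧ q ≠ 0 ∧ q.natDegree = d := ⟨P.natDegree, P, hPI, hP0, rfl⟩
  obtain ⟨q0, hq0I, hq00, hq0n⟩ := Nat.find_spec hexQ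
  set n := Nat.find hexQ with hn
  have hmin1 : ∀ q, q ∈ I → q ≠ 0 → n ≤ q.natDegree := by
    intro q hqI hq0
    exact Nat.find_min' hexQ ⟨q, hqI, hq0, rfl⟩
  have hn1 : 1 ≤ n := by
    rcases Nat.eq_zero_or_pos n with h0 | h1
    · exfalso
      rw [h0] at hq0n
      have hEq0 : EE v w q0 = 0 := RingHom.mem_ker.mp (hI ▸ hq0I)
      rw [Polynomial.eq_C_of_natDegree_eq_zero hq0n] at hEq0 hq00
      rw [EE_C] at hEq0
      rw [hva _ hEq0] at hq00
      simp at hq00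
    · exact h1
  obtain ⟨m0, hm0⟩ : ∃ m0, n = m0 + 1 := ⟨n - 1, by omega⟩
  have hexQ2 : ∃ d : ℕ, ∃ q, q ∈ I ∧ q ≠ 0 ∧ q.natDegree = n ∧ q.leadingCoeff.natDegree = d :=
    ⟨q0.leadingCoeff.natDegree, q0, hq0I, hq00, hq0n, rfl⟩
  obtain ⟨p, hpI, hp0, hpn, hpD⟩ := Nat.find_spec hexQ2
  set D := Nat.find hexQ2 with hD
  have hmin2 : ∀ q, q ∈ I → q ≠ 0 → q.natDegree = n → D ≤ q.leadingCoeff.natDegree := by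
    intro q h1 h2 h3
    exact Nat.find_min' hexQ2 ⟨q, h1, h2, h3, rfl⟩
  set g0 : Polynomial k := p.leadingCoeff with hg0
  have hpcoeffn : p.coeff n = g0 := by rw [hg0, ← hpn, coeff_natDegree]
  have hg00 : g0 ≠ 0 := by rw [hg0]; exact leadingCoeff_ne_zero.mpr hp0
  have hg0D : g0.coeff D ≠ 0 := by
    rw [← hpD, coeff_natDegree]
    exact leadingCoeff_ne_zero.mpr hg00
  set lam := c ^ (n + D) with hlam
  set p2 : Polynomial (Polynomial k) := Sig c p - C (Polynomial.C lam) * p with hp2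
  have hp2I : p2 ∈ I := by
    rw [hp2]
    exact I.sub_mem (hSigI p hpI) (Ideal.mul_mem_left _ _ hpI)
  set g1 : Polynomial k := sig0 c g0 * (Polynomial.C c) ^ n - Polynomial.C lam * g0 with hg1
  have hp2high : ∀ j, n < j → p2.coeff j = 0 := by
    intro j hj
    rw [hp2, coeff_sub, Sig_coeff_gt c p (by rw [hpn]; exact hj), coeff_C_mul,
      coeff_eq_zero_of_natDegree_lt (by rw [hpn]; exact hj), mul_zero, sub_zero]
  have hp2n : p2.coeff n = g1 := by
    have htop := Sig_coeff_top c p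
    rw [hpn, hpcoeffn] at htop
    rw [hp2, coeff_sub, coeff_C_mul, hpcoeffn, htop, hg1]
  have hg1coeff : ∀ j, g1.coeff j = c ^ n * (c ^ j * g0.coeff j) - lam * g0.coeff j := by
    intro j
    rw [hg1, coeff_sub, ← C_pow, coeff_mul_C, sig0_coeff, coeff_C_mul]
    ring
  have hg1D : g1.coeff D = 0 := by
    rw [hg1coeff, hlam, pow_add]
    ring
  have hg1high : ∀ j, D < j → g1.coeff j = 0 := by
    intro j hj
    rw [hg1coeff, coeff_eq_zero_of_natDegree_lt (by rw [hpD]; exact hj)]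
    ring
  have hg10 : g1 = 0 := by
    by_contra hne
    have hp2ne : p2 ≠ 0 := fun h => hne (by rw [← hp2n, h, coeff_zero])
    have hdeg_le : p2.natDegree ≤ n := natDegree_le_iff_coeff_eq_zero.mpr hp2high
    have hdeg_ge : n ≤ p2.natDegree := le_natDegree_of_ne_zero (by rw [hp2n]; exact hne)
    have hdeg : p2.natDegree = n := le_antisymm hdeg_le hdeg_ge
    have hlead : p2.leadingCoeff = g1 := by rw [← coeff_natDegree, hdeg, hp2n]
    have hDle := hmin2 p2 hp2I hp2ne hdeg
    rw [hlead] at hDle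
    have h1 : g1.natDegree ≤ D := natDegree_le_iff_coeff_eq_zero.mpr hg1high
    have h2 : g1.natDegree ≠ D := by
      intro h
      apply hne
      apply leadingCoeff_eq_zero.mp
      rw [← coeff_natDegree, h, hg1D]
    omega
  have hp20 : p2 = 0 := by
    by_contra hne
    have hdeg_le : p2.natDegree ≤ m0 := by
      apply natDegree_le_iff_coeff_eq_zero.mpr
      intro j hj
      rcases Nat.lt_or_ge n j with h | h
      · exact hp2high j h
      · have hjn : j = n := by omega
        rw [hjn, hp2n]
        exact hg10
    have := hmin1 p2 hp2I hne
    omega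
  have heq1 : sig0 c g0 = Polynomial.C (c ^ D) * g0 := by
    have h1 : sig0 c g0 * (Polynomial.C c) ^ n = Polynomial.C lam * g0 := by
      have := hg10
      rw [hg1, sub_eq_zero] at this
      exact this
    have h2 : Polynomial.C (c ^ n) * sig0 c g0
        = Polynomial.C (c ^ n) * (Polynomial.C (c ^ D) * g0) := by
      calc Polynomial.C (c ^ n) * sig0 c g0 = sig0 c g0 * (Polynomial.C c) ^ n := by
            rw [← C_pow]; ring
        _ = Polynomial.C lam * g0 := h1
        _ = Polynomial.C (c ^ n) * (Polynomial.C (c ^ D) * g0) := by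
            rw [hlam, pow_add, C_mul, mul_assoc]
    exact mul_left_cancel₀ (Polynomial.C_ne_zero.mpr (pow_ne_zero n hc)) h2
  have hcoeffm : p2.coeff m0 = 0 := by rw [hp20, coeff_zero]
  have hSm := Sig_coeff_sub_one c p (by rw [hpn, hm0])
  have hpcm1 : p.coeff (m0 + 1) = g0 := by rw [show m0 + 1 = n from hm0.symm, hpcoeffn]
  rw [hpcm1, heq1] at hSm
  have hB : sig0 c (p.coeff m0) * (Polynomial.C c) ^ m0
      + Polynomial.C (c ^ D) * g0 * (Polynomial.C c) ^ m0 * (X : Polynomial k)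
        * (m0 + 1 : Polynomial k)
      - Polynomial.C lam * p.coeff m0 = 0 := by
    have h1 : p2.coeff m0 = (Sig c p).coeff m0 - Polynomial.C lam * p.coeff m0 := by
      rw [hp2, coeff_sub, coeff_C_mul]
    rw [h1, hSm] at hcoeffm
    exact hcoeffm
  have hfin := congrArg (fun b => Polynomial.coeff b (D + 1)) hB
  simp only [coeff_sub, coeff_add, Polynomial.coeff_zero] at hfin
  have t1 : (sig0 c (p.coeff m0) * (Polynomial.C c) ^ m0).coeff (D + 1)
      = c ^ m0 * (c ^ (D + 1) * (p.coeff m0).coeff (D + 1)) := by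
    rw [← C_pow, coeff_mul_C, sig0_coeff]
    ring
  have t2 : (Polynomial.C (c ^ D) * g0 * (Polynomial.C c) ^ m0 * (X : Polynomial k)
        * (m0 + 1 : Polynomial k)).coeff (D + 1)
      = c ^ D * c ^ m0 * ((m0 : k) + 1) * g0.coeff D := by
    have hcast : (m0 + 1 : Polynomial k) = Polynomial.C ((m0 : k) + 1) := by
      rw [C_add, C_1, C_eq_natCast]
    have hre : Polynomial.C (c ^ D) * g0 * (Polynomial.C c) ^ m0 * (X : Polynomial k)
          * Polynomial.C ((m0 : k) + 1)
        = Polynomial.C (c ^ D * c ^ m0 * ((m0 : k) + 1)) * (g0 * (X : Polynomial k)) := by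
      rw [C_mul, C_mul, ← C_pow]
      ring
    rw [hcast, hre, coeff_C_mul, coeff_mul_X]
  have t3 : (Polynomial.C lam * p.coeff m0).coeff (D + 1)
      = lam * (p.coeff m0).coeff (D + 1) := coeff_C_mul _
  rw [t1, t2, t3] at hfin
  have hzero : ((m0 : k) + 1) * (c ^ D * c ^ m0) * g0.coeff D = 0 := by
    rw [hlam, hm0] at hfin
    linear_combination hfin
  rcases mul_eq_zero.mp hzero with h | h
  · rcases mul_eq_zero.mp h with h' | h'
    · exact Nat.cast_add_one_ne_zero m0 h'
    · exact mul_ne_zero (pow_ne_zero D hc) (pow_ne_zero m0 hc) h'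
  · exact hg0D h


end Stmt14

theorem stmt14 (k : Type*) [Field k] [CharZero k] (A : Type*) [CommRing A] [IsDomain A]
    [IsLocalRing A] [Algebra k A] (φ : A →ₐ[k] A)
    (hlf : ∀ a : A, (Submodule.span k (Set.range fun m : ℕ => (φ ^ (m + 1)) a)).FG)
    (v : A) (c : k) (hv : v ≠ 0) (hc : c ≠ 0) (hφv : φ v = c • v) :
    ¬ ∃ w : A, LinearIndependent k ![v, w] ∧ φ w = c • w + v := by
  rintro ⟨w, hli, hφw⟩
  have hφv' : φ v = algebraMap k A c * v := by rw [hφv, Algebra.smul_def]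
  have hφw' : φ w = algebraMap k A c * w + v := by rw [hφw, Algebra.smul_def]
  by_cases hvu : IsUnit v
  · exact aux_case1 φ hlf v w c hv hc hφv' hφw' hvu
  · by_cases hvw : IsUnit (v + w)
    · refine Stmt14.aux_case2 c φ hlf v w hv hc hφv' hφw' hvu 0 ?_
      simpa using hvw
    · refine Stmt14.aux_case2 c φ hlf v w hv hc hφv' hφw' hvu 1 ?_
      have hnu : -(v + w) ∈ nonunits A := by
        intro h
        exact hvw (by simpa using h.neg)
      have := IsLocalRing.isUnit_one_sub_self_of_mem_nonunits _ hnu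
      rw [sub_neg_eq_add] at this
      rw [map_one, add_assoc]
      exact this
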